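/- Let q be a real number with q > 0 and q ≠ 1, and let n ≥ 0. Suppose W(x,y) = Σ_{i=0}^n A_i x^{2(n−i)+1} y^{2i} ∈ ℂ[x,y] (a homogeneous polynomial of odd degree 2n+1 in which only even powers of y occur) with A₀ = 1 is σ_q-invariant. Then for every ν = 0, 1, …, 2n+1: Σ_{i=0}^{⌊(2n+1−ν)/2⌋} C(2n+1−2i, ν)·A_i − q^{n−ν+1/2}·Σ_{i=0}^{⌊ν/2⌋} C(2n+1−2i, 2n+1−ν)·A_i = 0. -/

import Mathlib

/- STATEMENT 16: if W = ∑_{i=0}^n A_i x^{2(n-i)+1} y^{2i} (odd degree 2n+1, only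
even powers of y) with A₀ = 1 is σ_q-invariant, then for ν = 0, 1, …, 2n+1:
∑_{i=0}^{⌊(2n+1-ν)/2⌋} C(2n+1-2i, ν) A_i
  - q^{n-ν+1/2} ∑_{i=0}^{⌊ν/2⌋} C(2n+1-2i, 2n+1-ν) A_i = 0. -/

noncomputable section

abbrev Cxy : Type := MvPolynomial (Fin 2) ℂ

/-- The action of `σ_q = (1/√q)[[1,q-1],[1,-1]]`: substitute
`x ↦ (x+(q-1)y)/√q`, `y ↦ (x-y)/√q`. -/
def actSigma (q : ℝ) (f : Cxy) : Cxy :=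
  MvPolynomial.aeval
    ![MvPolynomial.C ((Real.sqrt q : ℂ))⁻¹ *
        (MvPolynomial.X 0 + MvPolynomial.C ((q : ℂ) - 1) * MvPolynomial.X 1),
      MvPolynomial.C ((Real.sqrt q : ℂ))⁻¹ * (MvPolynomial.X 0 - MvPolynomial.X 1)] f

theorem binomial_moments_odd_div2 (q : ℝ) (hq0 : 0 < q) (hq1 : q ≠ 1) (n : ℕ)
    (A : ℕ → ℂ) (hA0 : A 0 = 1) (W : Cxy)
    (hW : W = ∑ i ∈ Finset.range (n + 1),
      MvPolynomial.C (A i) * MvPolynomial.X 0 ^ (2 * (n - i) + 1) * MvPolynomial.X 1 ^ (2 * i))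
    (hinv : actSigma q W = W) :
    ∀ ν ≤ 2 * n + 1,
      ∑ i ∈ Finset.range ((2 * n + 1 - ν) / 2 + 1), ((2 * n + 1 - 2 * i).choose ν : ℂ) * A i
        - ((q ^ ((n : ℝ) - (ν : ℝ) + 1 / 2) : ℝ) : ℂ) *
            ∑ i ∈ Finset.range (ν / 2 + 1), ((2 * n + 1 - 2 * i).choose (2 * n + 1 - ν) : ℂ) * A i
        = 0 := by
  intro ν hν
  set s : ℂ := ((Real.sqrt q : ℝ) : ℂ) with hs_def
  have hsq : s ^ 2 = (q : ℂ) := by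
    rw [hs_def, ← Complex.ofReal_pow, Real.sq_sqrt hq0.le]
  have hs0 : s ≠ 0 := by
    rw [hs_def]
    exact_mod_cast (Real.sqrt_pos.mpr hq0).ne'
  -- Step 1: evaluation identity
  have key : ∀ t : ℂ,
      ∑ i ∈ Finset.range (n+1), A i * (s⁻¹ * (t + q))^(2*(n-i)+1) * (s⁻¹ * t)^(2*i)
        = ∑ i ∈ Finset.range (n+1), A i * (1+t)^(2*(n-i)+1) := by
    intro t
    have h := congrArg (MvPolynomial.eval ![1+t, (1:ℂ)]) hinv
    rw [hW] at h
    unfold actSigma at h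
    simp only [map_sum, map_mul, map_pow, MvPolynomial.aeval_C, MvPolynomial.aeval_X,
      MvPolynomial.eval_C, MvPolynomial.eval_X, map_add, map_sub, Matrix.cons_val_zero,
      Matrix.cons_val_one, Matrix.head_cons, one_pow, mul_one, MvPolynomial.eval_mul,
      MvPolynomial.eval_add, MvPolynomial.eval_sub, map_one, MvPolynomial.algebraMap_eq] at h
    rw [← h]
    apply Finset.sum_congr rfl
    intro i hi
    congr 2 <;> ring
  -- Step 2: polynomial identity
  set P : Polynomial ℂ := ∑ i ∈ Finset.range (n+1),
    Polynomial.C (A i) * (1 + Polynomial.X)^(2*(n-i)+1) with hP_def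
  set R : Polynomial ℂ := ∑ i ∈ Finset.range (n+1),
    Polynomial.C (A i) * (Polynomial.X + Polynomial.C (q:ℂ))^(2*(n-i)+1) * Polynomial.X^(2*i)
    with hR_def
  have hPR : R = Polynomial.C (s^(2*n+1)) * P := by
    apply Polynomial.funext
    intro t
    have hk := key t
    simp only [hP_def, hR_def, Polynomial.eval_mul, Polynomial.eval_finset_sum,
      Polynomial.eval_C, Polynomial.eval_pow, Polynomial.eval_add, Polynomial.eval_X,
      Polynomial.eval_one]
    rw [← hk, Finset.mul_sum]
    apply Finset.sum_congr rfl
    intro i hi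
    have hE : 2*(n-i)+1 + 2*i = 2*n+1 := by
      have : i ≤ n := Nat.lt_succ_iff.mp (Finset.mem_range.mp hi)
      omega
    rw [← hE, pow_add]
    simp only [mul_pow, inv_pow]
    field_simp
    ring
  -- Step 3: coefficient comparison
  have hc := congrArg (fun p => Polynomial.coeff p ν) hPR
  simp only [hP_def, hR_def, Polynomial.finset_sum_coeff, Polynomial.coeff_C_mul,
    Finset.mul_sum] at hc
  have hcL : ∀ i ∈ Finset.range (n+1),
      (Polynomial.C (A i) * (Polynomial.X + Polynomial.C (q:ℂ))^(2*(n-i)+1)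
        * Polynomial.X^(2*i)).coeff ν
      = (q:ℂ)^(2*n+1-ν) * (((2*n+1-2*i).choose (2*n+1-ν) : ℂ) * A i) := by
    intro i hi
    have hin : i ≤ n := Nat.lt_succ_iff.mp (Finset.mem_range.mp hi)
    rw [Polynomial.coeff_mul_X_pow']
    by_cases h2i : 2*i ≤ ν
    · simp only [h2i, if_true, Polynomial.coeff_C_mul, Polynomial.coeff_X_add_C_pow]
      have h1 : 2*(n-i)+1 - (ν - 2*i) = 2*n+1-ν := by omega
      have h2 : (2*(n-i)+1).choose (ν - 2*i) = (2*n+1-2*i).choose (2*n+1-ν) := by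
        have e1 : 2*(n-i)+1 = 2*n+1-2*i := by omega
        rw [e1, ← Nat.choose_symm (show ν - 2*i ≤ 2*n+1-2*i by omega)]
        congr 1
        omega
      rw [h1, h2]
      push_cast
      ring
    · simp only [h2i, if_false]
      have : (2*n+1-2*i).choose (2*n+1-ν) = 0 := by
        apply Nat.choose_eq_zero_of_lt
        omega
      rw [this]
      push_cast
      ring
  have hcR : ∀ i ∈ Finset.range (n+1),
      s^(2*n+1) * (A i * ((1 + Polynomial.X : Polynomial ℂ)^(2*(n-i)+1)).coeff ν)
      = s^(2*n+1) * (((2*n+1-2*i).choose ν : ℂ) * A i) := by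
    intro i hi
    have hin : i ≤ n := Nat.lt_succ_iff.mp (Finset.mem_range.mp hi)
    have e0 : (1 : Polynomial ℂ) + Polynomial.X = Polynomial.X + Polynomial.C 1 := by
      rw [map_one]; ring
    rw [e0, Polynomial.coeff_X_add_C_pow]
    have e1 : 2*(n-i)+1 = 2*n+1-2*i := by omega
    rw [e1, one_pow]
    ring
  rw [Finset.sum_congr rfl hcL, Finset.sum_congr rfl hcR, ← Finset.mul_sum,
    ← Finset.mul_sum] at hc
  -- hc : q^(2n+1-ν) * d = s^(2n+1) * c
  set c : ℂ := ∑ i ∈ Finset.range (n+1), ((2*n+1-2*i).choose ν : ℂ) * A i with hc_def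
  set d : ℂ := ∑ i ∈ Finset.range (n+1), ((2*n+1-2*i).choose (2*n+1-ν) : ℂ) * A i with hd_def
  -- Step 4: extend the truncated sums
  have hsum1 : ∑ i ∈ Finset.range ((2 * n + 1 - ν) / 2 + 1),
      ((2 * n + 1 - 2 * i).choose ν : ℂ) * A i = c := by
    rw [hc_def]
    apply Finset.sum_subset
    · intro x hx
      simp only [Finset.mem_range] at hx ⊢
      omega
    · intro x hx1 hx
      simp only [Finset.mem_range] at hx1 hx
      have : (2*n+1-2*x).choose ν = 0 := by
        apply Nat.choose_eq_zero_of_lt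
        omega
      rw [this]
      push_cast
      ring
  have hsum2 : ∑ i ∈ Finset.range (ν / 2 + 1),
      ((2 * n + 1 - 2 * i).choose (2 * n + 1 - ν) : ℂ) * A i = d := by
    rw [hd_def]
    apply Finset.sum_subset
    · intro x hx
      simp only [Finset.mem_range] at hx ⊢
      omega
    · intro x hx1 hx
      simp only [Finset.mem_range] at hx1 hx
      have : (2*n+1-2*x).choose (2*n+1-ν) = 0 := by
        apply Nat.choose_eq_zero_of_lt
        omega
      rw [this]
      push_cast
      ring
  rw [hsum1, hsum2]
  -- Real power bookkeeping: q^(n-ν+1/2) * s^(2n+1) = q^(2n+1-ν) in ℂ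
  have hreal : ((q ^ ((n : ℝ) - (ν : ℝ) + 1 / 2) : ℝ) : ℂ) * s^(2*n+1) = (q:ℂ)^(2*n+1-ν) := by
    have h1 : (Real.sqrt q)^(2*n+1) = q ^ ((1/2 : ℝ) * (2*n+1 : ℕ)) := by
      rw [Real.sqrt_eq_rpow, ← Real.rpow_natCast (q ^ (1/2 : ℝ)) (2*n+1),
        ← Real.rpow_mul hq0.le]
    have h2 : q ^ ((n : ℝ) - (ν : ℝ) + 1 / 2) * (Real.sqrt q)^(2*n+1)
        = q ^ ((2*n+1-ν : ℕ) : ℝ) := by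
      rw [h1, ← Real.rpow_add hq0]
      congr 1
      have : ((2*n+1-ν : ℕ) : ℝ) = 2*(n:ℝ)+1-(ν:ℝ) := by
        push_cast [Nat.cast_sub hν]
        ring
      rw [this]
      push_cast
      ring
    have := congrArg (fun x : ℝ => (x : ℂ)) h2
    push_cast at this
    rw [Real.rpow_natCast] at this
    push_cast at this ⊢
    rw [hs_def]
    convert this using 2
  rw [← hreal] at hc
  have hs2n : s^(2*n+1) ≠ 0 := pow_ne_zero _ hs0
  have h3 : s^(2*n+1) * (((q ^ ((n : ℝ) - (ν : ℝ) + 1 / 2) : ℝ) : ℂ) * d)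
      = s^(2*n+1) * c := by linear_combination hc
  have h4 := mul_left_cancel₀ hs2n h3
  linear_combination -h4

end
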